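/- For every phase-space point z ∈ ℝ^{2n}: Tr(L(z)^j) = Tr(L̄(z)^j) for every integer 1 ≤ j ≤ n−1, and Tr(L(z)^n) = Tr(L̄(z)^n) + 4n. -/

import Mathlib

open Matrix BigOperators

noncomputable def bfun {n : ℕ} [NeZero n] (z : (Fin n → ℝ) × (Fin n → ℝ)) (j : Fin n) : ℝ :=
  Real.exp ((z.1 j - z.1 (j + 1)) / 2)

/-- The Lax matrix `L`. -/
noncomputable def Lax {n : ℕ} [NeZero n] (z : (Fin n → ℝ) × (Fin n → ℝ)) :
    Matrix (Fin n) (Fin n) ℝ := fun r s =>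
  (if r = s then z.2 r else 0) + (if r + 1 = s then bfun z r else 0) +
    (if s + 1 = r then bfun z s else 0)

/-- The sign `σ_r`, equal to `-1` for the index corresponding to `b_n`. -/
noncomputable def sgn {n : ℕ} [NeZero n] (j : Fin n) : ℝ := if j + 1 = 0 then -1 else 1

/-- The Lax matrix `L̄` obtained from `L` by `b_n ↦ -b_n`. -/
noncomputable def LaxBar {n : ℕ} [NeZero n] (z : (Fin n → ℝ) × (Fin n → ℝ)) :
    Matrix (Fin n) (Fin n) ℝ := fun r s =>
  (if r = s then z.2 r else 0) + (if r + 1 = s then sgn r * bfun z r else 0) +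
    (if s + 1 = r then sgn s * bfun z s else 0)

/-- The canonical Poisson bracket on `ℝ^{2n}`. -/
noncomputable def pb {n : ℕ} (f g : (Fin n → ℝ) × (Fin n → ℝ) → ℝ)
    (z : (Fin n → ℝ) × (Fin n → ℝ)) : ℝ :=
  ∑ j : Fin n,
    (fderiv ℝ f z (Pi.single j 1, 0) * fderiv ℝ g z (0, Pi.single j 1) -
     fderiv ℝ f z (0, Pi.single j 1) * fderiv ℝ g z (Pi.single j 1, 0))

/-- The integrals of motion `F_j = (1/j) Tr L^j`. -/
noncomputable def F {n : ℕ} [NeZero n] (j : ℕ) (z : (Fin n → ℝ) × (Fin n → ℝ)) : ℝ :=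
  (1 / j : ℝ) * (Lax z ^ j).trace

/-- The map `F = (F_1, …, F_n) : ℝ^{2n} → ℝ^n`. -/
noncomputable def Fvec {n : ℕ} [NeZero n] (z : (Fin n → ℝ) × (Fin n → ℝ)) : Fin n → ℝ :=
  fun j => F (j.val + 1) z

/-- The corank of `dF(z)`. -/
noncomputable def corank (n : ℕ) [NeZero n] (z : (Fin n → ℝ) × (Fin n → ℝ)) : ℕ :=
  n - Module.finrank ℝ (LinearMap.range (fderiv ℝ (Fvec (n := n)) z).toLinearMap)

/-- Number of (real) eigenvalues of `A` with two-dimensional eigenspace. -/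
noncomputable def nuCount {n : ℕ} (A : Matrix (Fin n) (Fin n) ℝ) : ℕ :=
  {μ : ℝ | Module.finrank ℝ (LinearMap.ker (Matrix.toLin' (A - μ • 1))) = 2}.ncard


section PortOpen
open Fin.NatCast Fin.CommRing

lemma telescope_fin {j : ℕ} (f : Fin (j+1) → ℤ) :
    ∑ i : Fin j, (f i.succ - f i.castSucc) = f (Fin.last j) - f 0 := by
  induction j with
  | zero => simp
  | succ j ih =>
    rw [Fin.sum_univ_castSucc]
    have h1 : ∀ i : Fin j, f (i.castSucc).succ - f (i.castSucc).castSucc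
        = (f ∘ Fin.castSucc) i.succ - (f ∘ Fin.castSucc) i.castSucc := by
      intro i; simp [Fin.succ_castSucc, -Fin.castSucc_succ]
    rw [Finset.sum_congr rfl (fun i _ => h1 i), ih (f ∘ Fin.castSucc)]
    have h2 : (f ∘ Fin.castSucc) 0 = f 0 := by simp
    have h3 : (f ∘ Fin.castSucc) (Fin.last j) = f (Fin.last j).castSucc := rfl
    have h4 : (Fin.last j).succ = Fin.last (j+1) := Fin.succ_last j
    rw [h2, h3, h4]
    ring

lemma val_one_fin {n : ℕ} [NeZero n] (hn : 2 ≤ n) : (1 : Fin n).val = 1 := by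
  rw [Fin.val_one']; exact Nat.mod_eq_of_lt (by omega)

lemma val_add_one' {n : ℕ} [NeZero n] (hn : 2 ≤ n) (a : Fin n) :
    ((a + 1 : Fin n).val) = if a.val + 1 = n then 0 else a.val + 1 := by
  rw [Fin.val_add, val_one_fin hn]
  by_cases h : a.val + 1 = n
  · simp [h]
  · have := a.isLt
    rw [if_neg h, Nat.mod_eq_of_lt (by omega)]

lemma add_one_eq_zero_iff {n : ℕ} [NeZero n] (hn : 2 ≤ n) (a : Fin n) :
    a + 1 = 0 ↔ a.val + 1 = n := by
  rw [Fin.ext_iff, val_add_one' hn a]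
  by_cases h : a.val + 1 = n <;> simp [h]

lemma two_ne_zero_fin {n : ℕ} [NeZero n] (hn : 3 ≤ n) : (2 : Fin n) ≠ 0 := by
  intro h
  have h2 : ((2 : ℕ) : Fin n) = 0 := by exact_mod_cast h
  rw [Fin.natCast_eq_zero] at h2
  exact absurd (Nat.le_of_dvd (by norm_num) h2) (by omega)

lemma one_ne_zero_fin {n : ℕ} [NeZero n] (hn : 2 ≤ n) : (1 : Fin n) ≠ 0 := by
  intro h
  have := congrArg Fin.val h
  rw [val_one_fin hn] at this
  simp at this

lemma not_both {n : ℕ} [NeZero n] (hn : 3 ≤ n) {a b : Fin n}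
    (h1 : b = a + 1) (h2 : a = b + 1) : False := by
  have h : a + 2 = a := by
    rw [show (2 : Fin n) = 1 + 1 by norm_num, ← add_assoc, ← h1, ← h2]
  exact two_ne_zero_fin hn (add_eq_left.mp h)

lemma succ_ne_self_fin {n : ℕ} [NeZero n] (hn : 2 ≤ n) (a : Fin n) : a + 1 ≠ a := by
  intro h
  exact one_ne_zero_fin hn (add_eq_left.mp h)

section Entries
variable {n : ℕ} [NeZero n] (z : (Fin n → ℝ) × (Fin n → ℝ)) {a b : Fin n}

lemma Lax_up (hn : 3 ≤ n) (h : b = a + 1) : Lax z a b = bfun z a := by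
  have hd : a ≠ b := fun he => succ_ne_self_fin (n := n) (by omega) a (he ▸ h.symm)
  have h2 : b + 1 ≠ a := fun he => not_both hn h he.symm
  simp [Lax, hd, h.symm, h2]

lemma LaxBar_up (hn : 3 ≤ n) (h : b = a + 1) : LaxBar z a b = sgn a * bfun z a := by
  have hd : a ≠ b := fun he => succ_ne_self_fin (n := n) (by omega) a (he ▸ h.symm)
  have h2 : b + 1 ≠ a := fun he => not_both hn h he.symm
  simp [LaxBar, hd, h.symm, h2]

lemma Lax_down (hn : 3 ≤ n) (h : a = b + 1) : Lax z a b = bfun z b := by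
  have hd : a ≠ b := fun he => succ_ne_self_fin (n := n) (by omega) b (he.symm ▸ h.symm)
  have h2 : a + 1 ≠ b := fun he => not_both hn h he.symm
  simp [Lax, hd, h.symm, h2]

lemma LaxBar_down (hn : 3 ≤ n) (h : a = b + 1) : LaxBar z a b = sgn b * bfun z b := by
  have hd : a ≠ b := fun he => succ_ne_self_fin (n := n) (by omega) b (he.symm ▸ h.symm)
  have h2 : a + 1 ≠ b := fun he => not_both hn h he.symm
  simp [LaxBar, hd, h.symm, h2]

lemma Lax_diag (hn2 : 2 ≤ n) (h : a = b) : Lax z a b = z.2 a := by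
  have h1 : a + 1 ≠ b := fun he => succ_ne_self_fin hn2 a (h ▸ he)
  have h2 : b + 1 ≠ a := fun he => succ_ne_self_fin hn2 b (h ▸ he)
  simp [Lax, h, h1, h2, show n ≠ 1 by omega]

lemma LaxBar_diag (hn2 : 2 ≤ n) (h : a = b) : LaxBar z a b = z.2 a := by
  have h1 : a + 1 ≠ b := fun he => succ_ne_self_fin hn2 a (h ▸ he)
  have h2 : b + 1 ≠ a := fun he => succ_ne_self_fin hn2 b (h ▸ he)
  simp [LaxBar, h, h1, h2, show n ≠ 1 by omega]

lemma Lax_dead (h0 : a ≠ b) (h1 : b ≠ a + 1) (h2 : a ≠ b + 1) : Lax z a b = 0 := by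
  simp [Lax, h0, Ne.symm h1, Ne.symm h2]

lemma LaxBar_dead (h0 : a ≠ b) (h1 : b ≠ a + 1) (h2 : a ≠ b + 1) : LaxBar z a b = 0 := by
  simp [LaxBar, h0, Ne.symm h1, Ne.symm h2]

end Entries


def vtx {n : ℕ} {j : ℕ} (r : Fin n) (w : Fin j → Fin n) : Fin (j+1) → Fin n :=
  Fin.cons r w

@[simp] lemma vtx_zero {n j : ℕ} (r : Fin n) (w : Fin j → Fin n) : vtx r w 0 = r := rfl
@[simp] lemma vtx_succ {n j : ℕ} (r : Fin n) (w : Fin j → Fin n) (i : Fin j) :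
    vtx r w i.succ = w i := by simp [vtx]

lemma pow_apply_walk {n : ℕ} [NeZero n] (A : Matrix (Fin n) (Fin n) ℝ) (j : ℕ) (r s : Fin n) :
    (A ^ j) r s = ∑ w : Fin j → Fin n,
      if vtx r w (Fin.last j) = s then
        ∏ i : Fin j, A (vtx r w i.castSucc) (vtx r w i.succ) else 0 := by
  induction j generalizing r with
  | zero =>
    simp [Matrix.one_apply, vtx, Fin.last]
  | succ j ih =>
    rw [pow_succ', Matrix.mul_apply]
    rw [← (Fin.consEquiv (fun _ : Fin (j+1) => Fin n)).sum_comp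
      (fun w : Fin (j+1) → Fin n => if vtx r w (Fin.last (j+1)) = s then
        ∏ i : Fin (j+1), A (vtx r w i.castSucc) (vtx r w i.succ) else 0)]
    rw [Fintype.sum_prod_type]
    refine Finset.sum_congr rfl fun t _ => ?_
    rw [ih t, Finset.mul_sum]
    refine Finset.sum_congr rfl fun w _ => ?_
    have hcons : ((Fin.consEquiv (fun _ : Fin (j+1) => Fin n)) (t, w) : Fin (j+1) → Fin n)
        = Fin.cons t w := rfl
    rw [hcons]
    have hlast : vtx r (Fin.cons t w) (Fin.last (j+1)) = vtx t w (Fin.last j) := by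
      rw [← Fin.succ_last, vtx_succ]; rfl
    rw [hlast]
    by_cases h : vtx t w (Fin.last j) = s
    · simp only [h, if_pos]
      rw [Fin.prod_univ_succ]
      have e0 : A (vtx r (Fin.cons t w) ((0 : Fin (j+1)).castSucc))
          (vtx r (Fin.cons t w) ((0 : Fin (j+1)).succ)) = A r t := by
        have h1 : vtx r (Fin.cons t w) ((0 : Fin (j+1)).succ) = t := by
          rw [vtx_succ]; rfl
        have h2 : ((0 : Fin (j+1)).castSucc) = (0 : Fin (j+2)) := rfl
        rw [h2, h1, vtx_zero]
      rw [e0]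
      congr 1
    · simp [h]

lemma prod_bfun {n : ℕ} [NeZero n] (z : (Fin n → ℝ) × (Fin n → ℝ)) :
    ∏ k : Fin n, bfun z k = 1 := by
  unfold bfun
  rw [← Real.exp_sum]
  have h : ∑ k : Fin n, (z.1 k - z.1 (k+1))/2 = 0 := by
    rw [← Finset.sum_div, Finset.sum_sub_distrib]
    have h2 : ∑ k : Fin n, z.1 (k+1) = ∑ k : Fin n, z.1 k :=
      Fintype.sum_equiv (Equiv.addRight 1) _ _ (fun k => rfl)
    rw [h2, sub_self, zero_div]
  rw [h, Real.exp_zero]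

lemma prod_sgn {n : ℕ} [NeZero n] : ∏ k : Fin n, sgn (n := n) k = -1 := by
  have h : ∀ k : Fin n, sgn k = if k = -1 then (-1:ℝ) else 1 := by
    intro k
    by_cases hk : k = -1
    · subst hk; simp [sgn]
    · have h2 : k + 1 ≠ 0 := fun he => hk (eq_neg_of_add_eq_zero_left he)
      simp [sgn, h2, hk]
  rw [Finset.prod_congr rfl (fun k _ => h k),
    Finset.prod_ite_eq' Finset.univ (-1 : Fin n) (fun _ => (-1:ℝ))]
  simp

lemma master {n : ℕ} [NeZero n] (hn : 3 ≤ n) (z : (Fin n → ℝ) × (Fin n → ℝ))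
    (j : ℕ) (hjn : j ≤ n) (v : Fin (j+1) → Fin n) (hcl : v (Fin.last j) = v 0) :
    ∏ i : Fin j, Lax z (v i.castSucc) (v i.succ)
      = ∏ i : Fin j, LaxBar z (v i.castSucc) (v i.succ)
        + (if j = n ∧ ((∀ i : Fin j, v i.succ = v i.castSucc + 1) ∨
            (∀ i : Fin j, v i.castSucc = v i.succ + 1)) then 2 else 0) := by
  classical
  have hn2 : 2 ≤ n := by omega
  by_cases hdead : ∀ i : Fin j, v i.succ = v i.castSucc + 1 ∨ v i.castSucc = v i.succ + 1 ∨
      v i.castSucc = v i.succ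
  case neg =>
    push_neg at hdead
    obtain ⟨i, h1, h2, h0⟩ := hdead
    have hL : Lax z (v i.castSucc) (v i.succ) = 0 := Lax_dead z h0 h1 h2
    have hLb : LaxBar z (v i.castSucc) (v i.succ) = 0 := LaxBar_dead z h0 h1 h2
    rw [Finset.prod_eq_zero (Finset.mem_univ i) hL,
        Finset.prod_eq_zero (Finset.mem_univ i) hLb]
    have hcond : ¬(j = n ∧ ((∀ i : Fin j, v i.succ = v i.castSucc + 1) ∨
        (∀ i : Fin j, v i.castSucc = v i.succ + 1))) := by
      rintro ⟨-, hu | hd⟩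
      · exact h1 (hu i)
      · exact h2 (hd i)
    rw [if_neg hcond]; ring
  case pos =>
  set δ : Fin j → ℤ := fun i =>
    if v i.succ = v i.castSucc + 1 then 1
    else if v i.castSucc = v i.succ + 1 then -1 else 0 with hδ
  set s : Fin j → ℤ := fun i =>
    if v i.succ = v i.castSucc + 1 ∧ v i.castSucc + 1 = 0 then 1
    else if v i.castSucc = v i.succ + 1 ∧ v i.succ + 1 = 0 then -1 else 0 with hs
  have key : ∀ i : Fin j,
      (LaxBar z (v i.castSucc) (v i.succ)
        = (-1:ℝ)^((s i).natAbs) * Lax z (v i.castSucc) (v i.succ)) ∧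
      (((v i.succ).val : ℤ) - ((v i.castSucc).val : ℤ) = δ i - n * s i) ∧
      (δ i = 1 ∨ δ i = 0 ∨ δ i = -1) ∧ (s i = 1 ∨ s i = 0 ∨ s i = -1) ∧
      (δ i = 1 → v i.succ = v i.castSucc + 1) ∧
      (δ i = -1 → v i.castSucc = v i.succ + 1) := by
    intro i
    rcases hdead i with h1 | h2 | h0
    · -- up step
      have hne : ¬ (v i.castSucc = v i.succ + 1) := fun he => not_both hn h1 he
      have hδi : δ i = 1 := by simp only [hδ]; rw [if_pos h1]
      have hval : (v i.succ).val = if (v i.castSucc).val + 1 = n then 0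
          else (v i.castSucc).val + 1 := by rw [h1, val_add_one' hn2]
      by_cases hc : v i.castSucc + 1 = 0
      · have hsi : s i = 1 := by simp only [hs]; rw [if_pos ⟨h1, hc⟩]
        have hvn : (v i.castSucc).val + 1 = n := (add_one_eq_zero_iff hn2 _).mp hc
        refine ⟨?_, ?_, by omega, by omega, fun _ => h1, by omega⟩
        · rw [LaxBar_up z hn h1, Lax_up z hn h1, hsi]
          unfold sgn; rw [if_pos hc]; norm_num
        · rw [hval, if_pos hvn, hδi, hsi]; push_cast; omega
      · have hsi : s i = 0 := by
          simp only [hs]; rw [if_neg (fun hh => hc hh.2), if_neg (fun hh => hne hh.1)]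
        have hvn : ¬ ((v i.castSucc).val + 1 = n) :=
          fun hh => hc ((add_one_eq_zero_iff hn2 _).mpr hh)
        refine ⟨?_, ?_, by omega, by omega, fun _ => h1, by omega⟩
        · rw [LaxBar_up z hn h1, Lax_up z hn h1, hsi]
          unfold sgn; rw [if_neg hc]; norm_num
        · rw [hval, if_neg hvn, hδi, hsi]; push_cast; omega
    · -- down step
      have hne : ¬ (v i.succ = v i.castSucc + 1) := fun he => not_both hn he h2
      have hδi : δ i = -1 := by simp only [hδ]; rw [if_neg hne, if_pos h2]
      have hval : (v i.castSucc).val = if (v i.succ).val + 1 = n then 0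
          else (v i.succ).val + 1 := by rw [h2, val_add_one' hn2]
      by_cases hc : v i.succ + 1 = 0
      · have hsi : s i = -1 := by
          simp only [hs]; rw [if_neg (fun hh => hne hh.1), if_pos ⟨h2, hc⟩]
        have hvn : (v i.succ).val + 1 = n := (add_one_eq_zero_iff hn2 _).mp hc
        refine ⟨?_, ?_, by omega, by omega, by omega, fun _ => h2⟩
        · rw [LaxBar_down z hn h2, Lax_down z hn h2, hsi]
          unfold sgn; rw [if_pos hc]; norm_num
        · rw [hval, if_pos hvn, hδi, hsi]; push_cast; omega
      · have hsi : s i = 0 := by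
          simp only [hs]; rw [if_neg (fun hh => hne hh.1), if_neg (fun hh => hc hh.2)]
        have hvn : ¬ ((v i.succ).val + 1 = n) :=
          fun hh => hc ((add_one_eq_zero_iff hn2 _).mpr hh)
        refine ⟨?_, ?_, by omega, by omega, by omega, fun _ => h2⟩
        · rw [LaxBar_down z hn h2, Lax_down z hn h2, hsi]
          unfold sgn; rw [if_neg hc]; norm_num
        · rw [hval, if_neg hvn, hδi, hsi]; push_cast; omega
    · -- flat step
      have hne1 : ¬ (v i.succ = v i.castSucc + 1) := by
        intro he; exact succ_ne_self_fin hn2 (v i.castSucc) (by rw [← he, h0])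
      have hne2 : ¬ (v i.castSucc = v i.succ + 1) := by
        intro he; exact succ_ne_self_fin hn2 (v i.succ) (by rw [← he, ← h0])
      have hδi : δ i = 0 := by simp only [hδ]; rw [if_neg hne1, if_neg hne2]
      have hsi : s i = 0 := by
        simp only [hs]; rw [if_neg (fun hh => hne1 hh.1), if_neg (fun hh => hne2 hh.1)]
      refine ⟨?_, ?_, by omega, by omega, by omega, by omega⟩
      · rw [LaxBar_diag z hn2 h0, Lax_diag z hn2 h0, hsi]; norm_num
      · rw [h0, hδi, hsi]; push_cast; omega
  have htel : ∑ i : Fin j, (((v i.succ).val : ℤ) - ((v i.castSucc).val : ℤ)) = 0 := by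
    have h := telescope_fin (fun m : Fin (j+1) => ((v m).val : ℤ))
    simp only [hcl] at h
    rw [h]; ring
  have hsum : (∑ i : Fin j, δ i) = n * ∑ i : Fin j, s i := by
    have h : ∑ i : Fin j, (δ i - n * s i) = 0 := by
      rw [← Finset.sum_congr rfl (fun i _ => (key i).2.1)]
      exact htel
    rw [Finset.sum_sub_distrib, ← Finset.mul_sum] at h
    linarith
  have habs : |∑ i : Fin j, δ i| ≤ (j : ℤ) := by
    calc |∑ i : Fin j, δ i| ≤ ∑ i : Fin j, |δ i| := Finset.abs_sum_le_sum_abs _ _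
    _ ≤ ∑ _i : Fin j, 1 := by
        refine Finset.sum_le_sum (fun i _ => ?_)
        rcases (key i).2.2.1 with h|h|h <;> simp [h]
    _ = (j : ℤ) := by simp
  by_cases hS : ∑ i : Fin j, s i = 0
  · have heven : Even (∑ i : Fin j, (s i).natAbs) := by
      have hdvd : ∀ i : Fin j, (2:ℤ) ∣ (((s i).natAbs : ℤ) - s i) := by
        intro i; rcases (key i).2.2.2.1 with h|h|h <;> simp [h] <;> norm_num
      have h2 : (2:ℤ) ∣ ∑ i : Fin j, (((s i).natAbs : ℤ) - s i) :=
        Finset.dvd_sum (fun i _ => hdvd i)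
      rw [Finset.sum_sub_distrib, hS, sub_zero] at h2
      have h3 : (2:ℤ) ∣ ((∑ i : Fin j, (s i).natAbs : ℕ) : ℤ) := by
        push_cast
        simpa [Int.natCast_natAbs] using h2
      have h4 : (∑ i : Fin j, (s i).natAbs) % 2 = 0 := by omega
      exact Nat.even_iff.mpr h4
    have hprodbar : ∏ i : Fin j, LaxBar z (v i.castSucc) (v i.succ)
        = ∏ i : Fin j, Lax z (v i.castSucc) (v i.succ) := by
      rw [Finset.prod_congr rfl (fun i _ => (key i).1), Finset.prod_mul_distrib,
        Finset.prod_pow_eq_pow_sum, Even.neg_one_pow heven, one_mul]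
    have hcond : ¬(j = n ∧ ((∀ i : Fin j, v i.succ = v i.castSucc + 1) ∨
        (∀ i : Fin j, v i.castSucc = v i.succ + 1))) := by
      rintro ⟨hjeq, hu | hd⟩
      · have hδ1 : ∀ i : Fin j, δ i = 1 := by
          intro i; simp only [hδ]; rw [if_pos (hu i)]
        have : (∑ i : Fin j, δ i) = (j : ℤ) := by
          rw [Finset.sum_congr rfl (fun i _ => hδ1 i)]; simp
        rw [hsum, hS, mul_zero] at this
        omega
      · have hδ1 : ∀ i : Fin j, δ i = -1 := by
          intro i; simp only [hδ]
          rw [if_neg (fun he => not_both hn he (hd i)), if_pos (hd i)]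
        have : (∑ i : Fin j, δ i) = -(j : ℤ) := by
          rw [Finset.sum_congr rfl (fun i _ => hδ1 i)]; simp
        rw [hsum, hS, mul_zero] at this
        omega
    rw [hprodbar, if_neg hcond, add_zero]
  · -- winding case
    have h1abs : 1 ≤ |∑ i : Fin j, s i| := Int.one_le_abs hS
    have habs2 : |∑ i : Fin j, δ i| = n * |∑ i : Fin j, s i| := by
      rw [hsum, abs_mul, abs_of_nonneg (by positivity : (0:ℤ) ≤ (n:ℤ))]
    have hjeq : j = n := by
      have hnj : (n:ℤ) ≤ (j:ℤ) := by nlinarith [habs, habs2, h1abs]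
      omega
    subst hjeq
    have hs1 : (∑ i : Fin j, s i) = 1 ∨ (∑ i : Fin j, s i) = -1 := by
      have : (j:ℤ) * |∑ i : Fin j, s i| ≤ (j:ℤ) := by rw [← habs2]; exact habs
      have hj0 : (0:ℤ) < (j:ℤ) := by exact_mod_cast (by omega : 0 < j)
      have hle : |∑ i : Fin j, s i| ≤ 1 := by nlinarith
      have := abs_le.mp hle
      omega
    rcases hs1 with h1 | h1
    · -- all steps up
      have hsd : (∑ i : Fin j, δ i) = (j:ℤ) := by rw [hsum, h1, mul_one]
      have hall : ∀ i : Fin j, δ i = 1 := by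
        by_contra hco
        push_neg at hco
        obtain ⟨i0, hi0⟩ := hco
        have hle : ∀ i : Fin j, δ i ≤ 1 := fun i => by
          rcases (key i).2.2.1 with h|h|h <;> omega
        have hlt : ∑ i : Fin j, δ i < ∑ _i : Fin j, (1:ℤ) :=
          Finset.sum_lt_sum (fun i _ => hle i)
            ⟨i0, Finset.mem_univ i0, by
              rcases (key i0).2.2.1 with h|h|h <;> omega⟩
        simp only [Finset.sum_const, Finset.card_univ, Fintype.card_fin,
          nsmul_eq_mul, mul_one] at hlt
        omega
      have hup : ∀ i : Fin j, v i.succ = v i.castSucc + 1 :=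
        fun i => (key i).2.2.2.2.1 (hall i)
      have hv0 : ∀ m : Fin (j+1), v m = v 0 + (m.val : Fin j) := by
        intro m
        induction m using Fin.induction with
        | zero => simp
        | succ i ih =>
          rw [hup i, ih]
          have hcast : ((i.succ.val : ℕ) : Fin j) = ((i.castSucc.val : ℕ) : Fin j) + 1 := by
            simp only [Fin.val_succ, Fin.coe_castSucc]
            push_cast
            ring
          rw [hcast, add_assoc]
      have haeq : ∀ i : Fin j, v i.castSucc = v 0 + i := by
        intro i
        rw [hv0 i.castSucc]
        congr 1
        simp only [Fin.coe_castSucc]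
        exact Fin.cast_val_eq_self i
      have hpb : ∏ i : Fin j, bfun z (v 0 + i) = 1 := by
        rw [Fintype.prod_equiv (Equiv.addLeft (v 0)) (fun i => bfun z (v 0 + i))
          (fun k => bfun z k) (fun i => rfl)]
        exact prod_bfun z
      have hps : ∏ i : Fin j, sgn (v 0 + i) = -1 := by
        rw [Fintype.prod_equiv (Equiv.addLeft (v 0)) (fun i => sgn (v 0 + i))
          (fun k => sgn k) (fun i => rfl)]
        exact prod_sgn
      have hLup : ∏ i : Fin j, Lax z (v i.castSucc) (v i.succ) = 1 := by
        rw [Finset.prod_congr rfl (fun i _ => Lax_up z hn (hup i)),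
          Finset.prod_congr rfl (fun (i : Fin j) _ => by rw [haeq i])]
        exact hpb
      have hBup : ∏ i : Fin j, LaxBar z (v i.castSucc) (v i.succ) = -1 := by
        rw [Finset.prod_congr rfl (fun i _ => LaxBar_up z hn (hup i)),
          Finset.prod_mul_distrib,
          Finset.prod_congr rfl (fun (i : Fin j) _ => by rw [haeq i] :
            ∀ i ∈ Finset.univ, sgn (v i.castSucc) = sgn (v 0 + i)),
          Finset.prod_congr rfl (fun (i : Fin j) _ => by rw [haeq i] :
            ∀ i ∈ Finset.univ, bfun z (v i.castSucc) = bfun z (v 0 + i)),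
          hpb, hps]
        norm_num
      rw [hLup, hBup, if_pos ⟨rfl, Or.inl hup⟩]
      norm_num
    · -- all steps down
      have hsd : (∑ i : Fin j, δ i) = -(j:ℤ) := by rw [hsum, h1]; ring
      have hall : ∀ i : Fin j, δ i = -1 := by
        by_contra hco
        push_neg at hco
        obtain ⟨i0, hi0⟩ := hco
        have hge : ∀ i : Fin j, -1 ≤ δ i := fun i => by
          rcases (key i).2.2.1 with h|h|h <;> omega
        have hlt : ∑ _i : Fin j, (-1:ℤ) < ∑ i : Fin j, δ i :=
          Finset.sum_lt_sum (fun i _ => hge i)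
            ⟨i0, Finset.mem_univ i0, by
              rcases (key i0).2.2.1 with h|h|h <;> omega⟩
        simp only [Finset.sum_const, Finset.card_univ, Fintype.card_fin,
          nsmul_eq_mul, mul_one, mul_neg_one] at hlt
        omega
      have hdown : ∀ i : Fin j, v i.castSucc = v i.succ + 1 :=
        fun i => (key i).2.2.2.2.2 (hall i)
      have hv0 : ∀ m : Fin (j+1), v m = v 0 - (m.val : Fin j) := by
        intro m
        induction m using Fin.induction with
        | zero => simp
        | succ i ih =>
          have hstep : v i.succ = v i.castSucc - 1 := by
            rw [hdown i]; ring
          rw [hstep, ih]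
          have hcast : ((i.succ.val : ℕ) : Fin j) = ((i.castSucc.val : ℕ) : Fin j) + 1 := by
            simp only [Fin.val_succ, Fin.coe_castSucc]
            push_cast
            ring
          rw [hcast]
          ring
      have hbeq : ∀ i : Fin j, v i.succ = (v 0 - 1) - i := by
        intro i
        rw [hv0 i.succ]
        have hcast : ((i.succ.val : ℕ) : Fin j) = i + 1 := by
          simp only [Fin.val_succ]
          push_cast
          rfl
        rw [hcast]
        ring
      have hpb : ∏ i : Fin j, bfun z (v 0 - 1 - i) = 1 := by
        rw [Fintype.prod_equiv (Equiv.subLeft (v 0 - 1)) (fun i => bfun z (v 0 - 1 - i))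
          (fun k => bfun z k) (fun i => rfl)]
        exact prod_bfun z
      have hps : ∏ i : Fin j, sgn (v 0 - 1 - i) = -1 := by
        rw [Fintype.prod_equiv (Equiv.subLeft (v 0 - 1)) (fun i => sgn (v 0 - 1 - i))
          (fun k => sgn k) (fun i => rfl)]
        exact prod_sgn
      have hLdn : ∏ i : Fin j, Lax z (v i.castSucc) (v i.succ) = 1 := by
        rw [Finset.prod_congr rfl (fun i _ => Lax_down z hn (hdown i)),
          Finset.prod_congr rfl (fun (i : Fin j) _ => by rw [hbeq i])]
        exact hpb
      have hBdn : ∏ i : Fin j, LaxBar z (v i.castSucc) (v i.succ) = -1 := by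
        rw [Finset.prod_congr rfl (fun i _ => LaxBar_down z hn (hdown i)),
          Finset.prod_mul_distrib,
          Finset.prod_congr rfl (fun (i : Fin j) _ => by rw [hbeq i] :
            ∀ i ∈ Finset.univ, sgn (v i.succ) = sgn (v 0 - 1 - i)),
          Finset.prod_congr rfl (fun (i : Fin j) _ => by rw [hbeq i] :
            ∀ i ∈ Finset.univ, bfun z (v i.succ) = bfun z (v 0 - 1 - i)),
          hpb, hps]
        norm_num
      rw [hLdn, hBdn, if_pos ⟨rfl, Or.inr hdown⟩]
      norm_num

-- trace formula
lemma trace_pow_walk {n : ℕ} [NeZero n] (A : Matrix (Fin n) (Fin n) ℝ) (j : ℕ) :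
    (A ^ j).trace = ∑ r : Fin n, ∑ w : Fin j → Fin n,
      if vtx r w (Fin.last j) = r then
        ∏ i : Fin j, A (vtx r w i.castSucc) (vtx r w i.succ) else 0 := by
  rw [Matrix.trace]
  exact Finset.sum_congr rfl fun r _ => pow_apply_walk A j r r

-- the two winding loops
def upW {n : ℕ} [NeZero n] (r : Fin n) : Fin n → Fin n := fun i => r + (i.val : Fin n) + 1
def downW {n : ℕ} [NeZero n] (r : Fin n) : Fin n → Fin n := fun i => r - (i.val : Fin n) - 1

lemma upW_vtx {n : ℕ} [NeZero n] (r : Fin n) (m : Fin (n+1)) :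
    vtx r (upW r) m = r + (m.val : Fin n) := by
  induction m using Fin.induction with
  | zero => simp
  | succ i ih =>
    rw [vtx_succ]
    show r + (i.val : Fin n) + 1 = _
    have : ((i.succ.val : ℕ) : Fin n) = ((i.castSucc.val : ℕ) : Fin n) + 1 := by
      simp only [Fin.val_succ, Fin.coe_castSucc]; push_cast; ring
    rw [this]
    simp only [Fin.coe_castSucc]
    ring

lemma downW_vtx {n : ℕ} [NeZero n] (r : Fin n) (m : Fin (n+1)) :
    vtx r (downW r) m = r - (m.val : Fin n) := by
  induction m using Fin.induction with
  | zero => simp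
  | succ i ih =>
    rw [vtx_succ]
    show r - (i.val : Fin n) - 1 = _
    have : ((i.succ.val : ℕ) : Fin n) = ((i.castSucc.val : ℕ) : Fin n) + 1 := by
      simp only [Fin.val_succ, Fin.coe_castSucc]; push_cast; ring
    rw [this]
    simp only [Fin.coe_castSucc]
    ring

lemma upW_closed {n : ℕ} [NeZero n] (r : Fin n) : vtx r (upW r) (Fin.last n) = r := by
  rw [upW_vtx]
  simp [Fin.val_last, Fin.natCast_self]

lemma downW_closed {n : ℕ} [NeZero n] (r : Fin n) : vtx r (downW r) (Fin.last n) = r := by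
  rw [downW_vtx]
  simp [Fin.val_last, Fin.natCast_self]

lemma up_char {n : ℕ} [NeZero n] (r : Fin n) (w : Fin n → Fin n) :
    (∀ i : Fin n, vtx r w i.succ = vtx r w i.castSucc + 1) ↔ w = upW r := by
  constructor
  · intro h
    have hv : ∀ m : Fin (n+1), vtx r w m = r + (m.val : Fin n) := by
      intro m
      induction m using Fin.induction with
      | zero => simp
      | succ i ih =>
        rw [h i, ih]
        have : ((i.succ.val : ℕ) : Fin n) = ((i.castSucc.val : ℕ) : Fin n) + 1 := by
          simp only [Fin.val_succ, Fin.coe_castSucc]; push_cast; ring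
        rw [this, add_assoc]
    funext i
    have := hv i.succ
    rw [vtx_succ] at this
    rw [this]
    show _ = r + (i.val : Fin n) + 1
    have : ((i.succ.val : ℕ) : Fin n) = ((i.val : ℕ) : Fin n) + 1 := by
      simp only [Fin.val_succ]; push_cast; ring
    rw [this, add_assoc]
  · rintro rfl
    intro i
    rw [upW_vtx, upW_vtx]
    have : ((i.succ.val : ℕ) : Fin n) = ((i.castSucc.val : ℕ) : Fin n) + 1 := by
      simp only [Fin.val_succ, Fin.coe_castSucc]; push_cast; ring
    rw [this, add_assoc]

lemma down_char {n : ℕ} [NeZero n] (r : Fin n) (w : Fin n → Fin n) :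
    (∀ i : Fin n, vtx r w i.castSucc = vtx r w i.succ + 1) ↔ w = downW r := by
  constructor
  · intro h
    have hv : ∀ m : Fin (n+1), vtx r w m = r - (m.val : Fin n) := by
      intro m
      induction m using Fin.induction with
      | zero => simp
      | succ i ih =>
        have hstep : vtx r w i.succ = vtx r w i.castSucc - 1 := by rw [h i]; ring
        rw [hstep, ih]
        have : ((i.succ.val : ℕ) : Fin n) = ((i.castSucc.val : ℕ) : Fin n) + 1 := by
          simp only [Fin.val_succ, Fin.coe_castSucc]; push_cast; ring
        rw [this]
        ring
    funext i
    have := hv i.succ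
    rw [vtx_succ] at this
    rw [this]
    show _ = r - (i.val : Fin n) - 1
    have : ((i.succ.val : ℕ) : Fin n) = ((i.val : ℕ) : Fin n) + 1 := by
      simp only [Fin.val_succ]; push_cast; ring
    rw [this]
    ring
  · rintro rfl
    intro i
    rw [downW_vtx, downW_vtx]
    have : ((i.succ.val : ℕ) : Fin n) = ((i.castSucc.val : ℕ) : Fin n) + 1 := by
      simp only [Fin.val_succ, Fin.coe_castSucc]; push_cast; ring
    rw [this]
    ring

lemma upW_ne_downW {n : ℕ} [NeZero n] (hn : 3 ≤ n) (r : Fin n) : upW r ≠ downW r := by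
  intro h
  have h0 := congrFun h 0
  simp only [upW, downW] at h0
  -- r + 0 + 1 = r - 0 - 1
  have : r + (0:Fin n) + 1 = r - (0:Fin n) - 1 := by

    simpa using h0
  have h2 : (2 : Fin n) = 0 := by
    have := this
    have h3 : r + 1 = r - 1 := by simpa using this
    have : r + 1 + 1 = r := by rw [h3]; ring
    have h4 : r + 2 = r := by
      rw [show (2:Fin n) = 1 + 1 by norm_num, ← add_assoc]; exact this
    have := add_eq_left.mp h4
    exact this
  exact two_ne_zero_fin hn h2


end PortOpen

/-- Tr L^j = Tr L̄^j for 1 ≤ j ≤ n−1, and Tr L^n = Tr L̄^n + 4n. -/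
theorem stmt2 (n : ℕ) [NeZero n] (hn : 2 ≤ n) (z : (Fin n → ℝ) × (Fin n → ℝ)) :
    (∀ j : ℕ, 1 ≤ j → j ≤ n - 1 → (Lax z ^ j).trace = (LaxBar z ^ j).trace) ∧
    (Lax z ^ n).trace = (LaxBar z ^ n).trace + 4 * n := by
  constructor
  · intro j hj1 hj2
    by_cases hn3 : 3 ≤ n
    · rw [trace_pow_walk, trace_pow_walk]
      refine Finset.sum_congr rfl fun r _ => Finset.sum_congr rfl fun w _ => ?_
      by_cases hcl : vtx r w (Fin.last j) = r
      · rw [if_pos hcl, if_pos hcl]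
        have hm := master hn3 z j (by omega) (vtx r w) (by rw [hcl, vtx_zero])
        have hne : ¬ (j = n ∧ ((∀ i : Fin j, vtx r w i.succ = vtx r w i.castSucc + 1) ∨
            (∀ i : Fin j, vtx r w i.castSucc = vtx r w i.succ + 1))) :=
          fun hh => absurd hh.1 (by omega)
        rw [hm, if_neg hne, add_zero]
      · rw [if_neg hcl, if_neg hcl]
    · -- n = 2, j = 1
      have hj : j = 1 := by omega
      subst hj
      rw [pow_one, pow_one, Matrix.trace, Matrix.trace]
      refine Finset.sum_congr rfl fun r _ => ?_
      show Lax z r r = LaxBar z r r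
      rw [Lax_diag z hn rfl, LaxBar_diag z hn rfl]
  · by_cases hn3 : 3 ≤ n
    · rw [trace_pow_walk, trace_pow_walk]
      have key : ∀ r : Fin n, ∀ w : Fin n → Fin n,
          (if vtx r w (Fin.last n) = r then
            ∏ i : Fin n, Lax z (vtx r w i.castSucc) (vtx r w i.succ) else 0)
          = (if vtx r w (Fin.last n) = r then
            ∏ i : Fin n, LaxBar z (vtx r w i.castSucc) (vtx r w i.succ) else 0)
            + ((if w = upW r then (2:ℝ) else 0) + (if w = downW r then (2:ℝ) else 0)) := by
        intro r w
        by_cases hcl : vtx r w (Fin.last n) = r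
        · rw [if_pos hcl, if_pos hcl]
          have hm := master hn3 z n le_rfl (vtx r w) (by rw [hcl, vtx_zero])
          rw [hm]
          congr 1
          by_cases hu : w = upW r
          · have hd : w ≠ downW r := fun he => upW_ne_downW hn3 r (hu ▸ he)
            rw [if_pos hu, if_neg hd, if_pos ⟨rfl, Or.inl ((up_char r w).mpr hu)⟩]
            norm_num
          · by_cases hd : w = downW r
            · rw [if_pos hd, if_neg hu, if_pos ⟨rfl, Or.inr ((down_char r w).mpr hd)⟩]
              norm_num
            · have hno : ¬(n = n ∧ ((∀ i : Fin n, vtx r w i.succ = vtx r w i.castSucc + 1) ∨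
                  (∀ i : Fin n, vtx r w i.castSucc = vtx r w i.succ + 1))) := by
                rintro ⟨-, hc | hc⟩
                · exact hu ((up_char r w).mp hc)
                · exact hd ((down_char r w).mp hc)
              rw [if_neg hu, if_neg hd, if_neg hno]
              norm_num
        · rw [if_neg hcl, if_neg hcl]
          have hu : w ≠ upW r := fun he => hcl (by rw [he]; exact upW_closed r)
          have hd : w ≠ downW r := fun he => hcl (by rw [he]; exact downW_closed r)
          rw [if_neg hu, if_neg hd]
          ring
      rw [Finset.sum_congr rfl (fun r _ => Finset.sum_congr rfl (fun w _ => key r w))]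
      have hsplit : ∀ r : Fin n, (∑ w : Fin n → Fin n,
          ((if vtx r w (Fin.last n) = r then
            ∏ i : Fin n, LaxBar z (vtx r w i.castSucc) (vtx r w i.succ) else 0)
            + ((if w = upW r then (2:ℝ) else 0) + (if w = downW r then (2:ℝ) else 0))))
          = (∑ w : Fin n → Fin n, (if vtx r w (Fin.last n) = r then
            ∏ i : Fin n, LaxBar z (vtx r w i.castSucc) (vtx r w i.succ) else 0)) + 4 := by
        intro r
        rw [Finset.sum_add_distrib, Finset.sum_add_distrib,
          Finset.sum_ite_eq' Finset.univ (upW r) (fun _ => (2:ℝ)),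
          Finset.sum_ite_eq' Finset.univ (downW r) (fun _ => (2:ℝ))]
        simp
        ring
      rw [Finset.sum_congr rfl (fun r _ => hsplit r), Finset.sum_add_distrib]
      congr 1
      simp [Finset.sum_const, Finset.card_univ, mul_comm]
    · -- n = 2
      have hn2 : n = 2 := by omega
      subst hn2
      have hb : bfun z 0 * bfun z 1 = 1 := by
        unfold bfun
        rw [show ((1:Fin 2) + 1) = 0 from rfl, show ((0:Fin 2) + 1) = 1 from rfl,
          ← Real.exp_add, show (z.1 0 - z.1 1)/2 + (z.1 1 - z.1 0)/2 = 0 by ring,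
          Real.exp_zero]
      rw [pow_two, pow_two, Matrix.trace, Matrix.trace]
      simp only [Matrix.diag, Matrix.mul_apply, Fin.sum_univ_two]
      have e1 : Lax z 0 0 = z.2 0 := by simp [Lax]
      have e2 : Lax z 1 1 = z.2 1 := by simp [Lax]
      have e3 : Lax z 0 1 = bfun z 0 + bfun z 1 := by
        simp [Lax, show ((0:Fin 2) + 1) = 1 from rfl, show ((1:Fin 2) + 1) = 0 from rfl]
      have e4 : Lax z 1 0 = bfun z 1 + bfun z 0 := by
        simp [Lax, show ((0:Fin 2) + 1) = 1 from rfl, show ((1:Fin 2) + 1) = 0 from rfl]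
      have f1 : LaxBar z 0 0 = z.2 0 := by simp [LaxBar]
      have f2 : LaxBar z 1 1 = z.2 1 := by simp [LaxBar]
      have hne10 : (1:Fin 2) ≠ 0 := one_ne_zero_fin (le_refl 2)
      have f3 : LaxBar z 0 1 = bfun z 0 - bfun z 1 := by
        simp [LaxBar, sgn, show ((0:Fin 2) + 1) = 1 from rfl,
          show ((1:Fin 2) + 1) = 0 from rfl, hne10]
        ring
      have f4 : LaxBar z 1 0 = bfun z 0 - bfun z 1 := by
        simp [LaxBar, sgn, show ((0:Fin 2) + 1) = 1 from rfl,
          show ((1:Fin 2) + 1) = 0 from rfl, hne10]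
        ring
      rw [e1, e2, e3, e4, f1, f2, f3, f4]
      push_cast
      linear_combination (8:ℝ) * hb
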